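/- arXiv:1603.08827 — 3 statements merged into one kernel-verified Lean document; each statement's English description precedes it below -/
import Mathlib

section
/- For every n > 2 there exist n pairwise disjoint pairs {α_1,β_1},...,{α_n,β_n} of vertices of the hypercube Q_n with d(α_i,β_i) odd for every i, such that there do NOT exist n pairwise vertex-disjoint paths in Q_n, the i-th path having endpoints α_i and β_i, covering every vertex of Q_n exactly once. -/
open SimpleGraph Finset

attribute [local instance 10] Classical.propDecidable

/-- Vertices of the `n`-dimensional hypercube: 0-1 vectors of length `n`. -/
abbrev Vtx (n : ℕ) : Type := Fin n → Bool

/-- The hypercube graph `Q_n`: two vectors are adjacent iff they differ in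
exactly one coordinate, i.e. their Hamming distance is `1`. -/
def cube (n : ℕ) : SimpleGraph (Vtx n) where
  Adj α β := hammingDist α β = 1
  symm := by
    constructor
    intro α β h
    rwa [hammingDist_comm]
  loopless := by
    constructor
    intro α h
    simp [hammingDist_self] at h

/-- The parity `χ(α) = (-1)^(sum of coordinates of α)`. -/
def chi {n : ℕ} (α : Vtx n) : ℤ := ∏ i, if α i then (-1 : ℤ) else 1

/-- `χ(α) + χ(β)` for an unordered pair `{α, β}`. -/
def pairChi {n : ℕ} : Sym2 (Vtx n) → ℤ :=
  Sym2.lift ⟨fun α β => chi α + chi β, fun _ _ => add_comm _ _⟩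

/-- `∪A` : the set of all vertices occurring in pairs of `A`. -/
def suppA {n : ℕ} (A : Finset (Sym2 (Vtx n))) : Set (Vtx n) :=
  {v | ∃ p ∈ A, v ∈ p}

/-- A pair-set: distinct pairs are disjoint (as vertex sets), and a nonempty
pair-set contains a non-degenerated pair. -/
def IsPairSet {n : ℕ} (A : Finset (Sym2 (Vtx n))) : Prop :=
  (∀ p ∈ A, ∀ q ∈ A, p ≠ q → ∀ v : Vtx n, v ∈ p → v ∉ q) ∧
  (A.Nonempty → ∃ p ∈ A, ¬ p.IsDiag)

/-- An odd pair: its two vertices have different parities. -/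
def OddPair {n : ℕ} (p : Sym2 (Vtx n)) : Prop :=
  ∃ α β : Vtx n, p = s(α, β) ∧ chi α ≠ chi β

/-- An odd pair-set: every pair is odd. -/
def OddPairSet {n : ℕ} (A : Finset (Sym2 (Vtx n))) : Prop :=
  ∀ p ∈ A, OddPair p

/-- A balanced pair-set: the parities sum up to `0`. -/
def BalancedPS {n : ℕ} (A : Finset (Sym2 (Vtx n))) : Prop :=
  ∑ p ∈ A, pairChi p = 0

/-- An edge-pair: its two vertices differ in exactly one coordinate. -/
def IsEdgePair {n : ℕ} (p : Sym2 (Vtx n)) : Prop :=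
  ∃ α β : Vtx n, p = s(α, β) ∧ hammingDist α β = 1

/-- `enco X` : vertices all of whose neighbours lie in `X`. -/
def enco {n : ℕ} (X : Set (Vtx n)) : Set (Vtx n) :=
  {γ | ∀ δ : Vtx n, (cube n).Adj γ δ → δ ∈ X}

/-- `enc X = enco X \ X` for a vertex set `X`. -/
def encSet {n : ℕ} (X : Set (Vtx n)) : Set (Vtx n) := enco X \ X

/-- `enc A = enco (∪A) \ ∪A` for a pair-set `A`. -/
def encA {n : ℕ} (A : Finset (Sym2 (Vtx n))) : Set (Vtx n) :=
  enco (suppA A) \ suppA A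

/-- A pair-set `A` is connectable if there is a family of paths in `Q_n`, one
path joining the two vertices of each pair of `A`, such that every vertex of
`Q_n` lies on exactly one of these paths. -/
def Connectable {n : ℕ} (A : Finset (Sym2 (Vtx n))) : Prop :=
  ∃ (src tgt : Sym2 (Vtx n) → Vtx n)
    (path : (p : Sym2 (Vtx n)) → (cube n).Walk (src p) (tgt p)),
    (∀ p ∈ A, p = s(src p, tgt p)) ∧
    (∀ p ∈ A, (path p).IsPath) ∧
    (∀ v : Vtx n, ∃! p : Sym2 (Vtx n), p ∈ A ∧ v ∈ (path p).support)

/-- `A` contains at least two edge-pairs. -/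
def TwoEdgePairs {n : ℕ} (A : Finset (Sym2 (Vtx n))) : Prop :=
  ∃ p ∈ A, ∃ q ∈ A, p ≠ q ∧ IsEdgePair p ∧ IsEdgePair q

/-- A diminishable pair-set. -/
def Diminishable {n : ℕ} (A : Finset (Sym2 (Vtx n))) : Prop :=
  IsPairSet A ∧ OddPairSet A ∧
  ((A.card ≤ n - 1 ∧
      (n = 4 →
        (∃ p ∈ A, IsEdgePair p) ∨
          ¬∃ X : Set (Vtx n), suppA A ⊆ X ∧
            Nonempty ((cube n).induce X ≃g cube 3))) ∨
    (A.card = n ∧ n ≠ 4 ∧ TwoEdgePairs A ∧ encA A = ∅))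

/-- The coordinate `i` is separating for `A`. -/
def Separating {n : ℕ} (i : Fin n) (A : Finset (Sym2 (Vtx n))) : Prop :=
  ∃ α β α' β' : Vtx n, s(α, β) ∈ A ∧ s(α', β') ∈ A ∧
    hammingDist α β = 1 ∧ hammingDist α' β' = 1 ∧
    α i = β i ∧ α' i = β' i ∧ α i ≠ α' i

/-- The relation `A ⇒ B`. -/
def StepRel {n : ℕ} (A B : Finset (Sym2 (Vtx n))) : Prop :=
  ∃ (α β α' β' : Vtx n) (i : Fin n),
    s(α, β) ∈ A ∧ s(α', β') ∈ A ∧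
    β' = Function.update β i (!(β i)) ∧
    B = A \ {s(α, β), s(α', β')} ∪ {s(α, α')}

/-- Isomorphism of pair-sets, induced by an automorphism of the hypercube. -/
def Isomorphic {n : ℕ} (A B : Finset (Sym2 (Vtx n))) : Prop :=
  ∃ f : cube n ≃g cube n, B = A.image (Sym2.map f)

/-- `ρ_{i=k}` applied to a pair-set: keep the pairs with both `i`-th
coordinates equal to `k` and delete the `i`-th coordinate. -/
def rhoPairs {m : ℕ} (i : Fin (m + 1)) (k : Bool) (B : Finset (Sym2 (Vtx (m + 1)))) :
    Finset (Sym2 (Vtx m)) :=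
  (B.filter fun p => ∀ v ∈ p, v i = k).image (Sym2.map (Fin.removeNth i))

/-- `ρ_{i=k}` applied to a vertex set. -/
def rhoSet {m : ℕ} (i : Fin (m + 1)) (k : Bool) (X : Set (Vtx (m + 1))) : Set (Vtx m) :=
  {γ | ∃ α ∈ X, α i = k ∧ γ = Fin.removeNth i α}

/-- `ι_{i,k}(A, B)`. -/
def iotaPairs {m : ℕ} (i : Fin (m + 1)) (k : Bool) (A B : Finset (Sym2 (Vtx m))) :
    Finset (Sym2 (Vtx (m + 1))) :=
  A.image (Sym2.map (i.insertNth k)) ∪ B.image (Sym2.map (i.insertNth (!k)))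

lemma exists_two_nbrs {V : Type*} [DecidableEq V] {G : SimpleGraph V} {a b : V}
    (W : G.Walk a b) (hW : W.IsPath) (v : V) (hv : v ∈ W.support)
    (hva : v ≠ a) (hvb : v ≠ b) :
    ∃ u w, u ≠ w ∧ G.Adj v u ∧ G.Adj v w ∧ u ∈ W.support ∧ w ∈ W.support := by
  have hspec := W.take_spec hv
  set q := W.takeUntil v hv with hq
  set r := W.dropUntil v hv with hr
  have hrn : ¬ r.Nil := SimpleGraph.Walk.not_nil_of_ne hvb
  obtain ⟨w, hwadj, r', hr'⟩ := SimpleGraph.Walk.not_nil_iff.mp hrn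
  have hqn : ¬ q.reverse.Nil := SimpleGraph.Walk.not_nil_of_ne hva
  obtain ⟨u, huadj, q', hq'⟩ := SimpleGraph.Walk.not_nil_iff.mp hqn
  have huq : u ∈ q.support := by
    have : u ∈ q.reverse.support := by
      rw [hq']
      simp [SimpleGraph.Walk.support_cons]
    rwa [SimpleGraph.Walk.support_reverse, List.mem_reverse] at this
  have hwr : w ∈ r.support.tail := by
    rw [hr']
    simp [SimpleGraph.Walk.support_cons]
  have hnd : (q.support ++ r.support.tail).Nodup := by
    have := hW.support_nodup
    rwa [← hspec, SimpleGraph.Walk.support_append] at this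
  have hdisj : List.Disjoint q.support r.support.tail :=
    by intro a ha hb; exact ((List.nodup_append).mp hnd).2.2 a ha a hb rfl
  refine ⟨u, w, fun h => hdisj huq (h ▸ hwr), huadj, hwadj, ?_, ?_⟩
  · exact SimpleGraph.Walk.support_takeUntil_subset W hv huq
  · exact SimpleGraph.Walk.support_dropUntil_subset W hv (List.mem_of_mem_tail hwr)

def succF {n : ℕ} (i : Fin n) : Fin n :=
  ⟨(i.val + 1) % n, Nat.mod_lt _ (Nat.lt_of_le_of_lt (Nat.zero_le _) i.isLt)⟩

def avec {n : ℕ} (i : Fin n) : Vtx n := fun j => decide (j = i)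

def bvec {n : ℕ} (i : Fin n) : Vtx n := fun j => decide (j = i ∨ j = succF i)

lemma succF_ne {n : ℕ} (hn : 2 < n) (i : Fin n) : succF i ≠ i := by
  intro h
  have hv : (i.val + 1) % n = i.val := congrArg Fin.val h
  have hi := i.isLt
  by_cases h1 : i.val + 1 < n
  · rw [Nat.mod_eq_of_lt h1] at hv; omega
  · have he : i.val + 1 = n := by omega
    rw [he, Nat.mod_self] at hv
    omega

lemma succF_ne2 {n : ℕ} (hn : 2 < n) (i j : Fin n) (h1 : i = succF j) (h2 : j = succF i) :
    False := by
  have hv1 : i.val = (j.val + 1) % n := congrArg Fin.val h1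
  have hv2 : j.val = (i.val + 1) % n := congrArg Fin.val h2
  have hi := i.isLt
  have hj := j.isLt
  by_cases c1 : j.val + 1 < n
  · rw [Nat.mod_eq_of_lt c1] at hv1
    by_cases c2 : i.val + 1 < n
    · rw [Nat.mod_eq_of_lt c2] at hv2; omega
    · have he : i.val + 1 = n := by omega
      rw [he, Nat.mod_self] at hv2
      omega
  · have he : j.val + 1 = n := by omega
    rw [he, Nat.mod_self] at hv1
    rw [hv1] at hv2
    rw [Nat.mod_eq_of_lt (by omega)] at hv2
    omega

lemma eq_avec_of_dist_one {n : ℕ} (u : Vtx n)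
    (h : hammingDist (fun _ => false) u = 1) : ∃ k, u = avec k := by
  unfold hammingDist at h
  obtain ⟨k, hk⟩ := Finset.card_eq_one.mp h
  refine ⟨k, funext fun j => ?_⟩
  have hj := Finset.ext_iff.mp hk j
  simp only [Finset.mem_filter, Finset.mem_univ, true_and, Finset.mem_singleton, ne_eq] at hj
  by_cases hjk : j = k
  · subst hjk
    have : ¬ false = u j := hj.mpr rfl
    simp [avec]
    cases hu : u j
    · exact absurd hu.symm this
    · rfl
  · have : ¬ ¬ false = u j := fun hne => hjk (hj.mp hne)
    simp [avec, hjk]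
    cases hu : u j
    · rfl
    · exact absurd (by simp [hu]) this

lemma dist_avec_bvec {n : ℕ} (hn : 2 < n) (i : Fin n) :
    hammingDist (avec i) (bvec i) = 1 := by
  unfold hammingDist
  have hset : ({j | avec i j ≠ bvec i j} : Finset (Fin n)) = {succF i} := by
    ext j
    simp only [Finset.mem_filter, Finset.mem_univ, true_and, Finset.mem_singleton,
      avec, bvec, ne_eq, decide_eq_decide]
    have := succF_ne hn i
    constructor
    · intro hne
      by_contra hj
      exact hne ⟨fun h => Or.inl h, fun h => by tauto⟩
    · intro hj hiff
      have : j = i := hiff.mpr (Or.inr hj)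
      rw [hj] at this
      exact succF_ne hn i this
  rw [hset, Finset.card_singleton]

/-- For every `n > 2` there are `n` pairwise disjoint pairs
of vertices of `Q_n` at odd Hamming distances that cannot be joined by `n`
pairwise vertex-disjoint paths covering every vertex of `Q_n` exactly once. -/
theorem stmt1 (n : ℕ) (hn : 2 < n) :
    ∃ α β : Fin n → Vtx n,
      (∀ i : Fin n, Odd (hammingDist (α i) (β i))) ∧
      (∀ i j : Fin n, i ≠ j →
        ({α i, β i} : Set (Vtx n)) ∩ {α j, β j} = ∅) ∧
      ¬ ∃ P : (i : Fin n) → (cube n).Walk (α i) (β i),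
          (∀ i : Fin n, (P i).IsPath) ∧
          ∀ v : Vtx n, ∃! i : Fin n, v ∈ (P i).support := by
  classical
  have havec_inj : ∀ a b : Fin n, avec a = avec b → a = b := by
    intro a b h
    have := congrFun h a
    simp [avec] at this
    exact this
  have hab : ∀ a b : Fin n, avec a ≠ bvec b := by
    intro a b h
    have h1 := congrFun h b
    have h2 := congrFun h (succF b)
    simp [avec, bvec] at h1 h2
    exact succF_ne hn b (h2.trans h1.symm)
  have hbb : ∀ a b : Fin n, a ≠ b → bvec a ≠ bvec b := by
    intro a b hne h
    have h1 := congrFun h a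
    have h2 := congrFun h b
    simp [avec, bvec] at h1 h2
    have ha : a = succF b := by
      rcases h1 with h' | h'
      · exact absurd h' hne
      · exact h'
    have hb : b = succF a := by
      rcases h2 with h' | h'
      · exact absurd h'.symm hne
      · exact h'
    exact succF_ne2 hn a b ha hb
  refine ⟨avec, bvec, ?_, ?_, ?_⟩
  · intro i
    rw [dist_avec_bvec hn i]
    exact odd_one
  · intro i j hij
    rw [Set.eq_empty_iff_forall_notMem]
    rintro v ⟨h1, h2⟩
    simp only [Set.mem_insert_iff, Set.mem_singleton_iff] at h1 h2
    rcases h1 with h1 | h1 <;> rcases h2 with h2 | h2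
    · exact hij (havec_inj i j (h1 ▸ h2 ▸ rfl))
    · exact hab i j (h1 ▸ h2 ▸ rfl)
    · exact hab j i (h2 ▸ h1 ▸ rfl)
    · exact hbb i j hij (h1 ▸ h2 ▸ rfl)
  · rintro ⟨P, hpath, hcover⟩
    set z : Vtx n := fun _ => false with hz
    obtain ⟨j, hjz, -⟩ := hcover z
    have hza : z ≠ avec j := by
      intro h
      have := congrFun h j
      simp [avec, hz] at this
    have hzb : z ≠ bvec j := by
      intro h
      have := congrFun h j
      simp [bvec, hz] at this
    obtain ⟨u, w, huw, hadju, hadjw, hus, hws⟩ :=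
      exists_two_nbrs (P j) (hpath j) z hjz hza hzb
    have key : ∀ x : Vtx n, (cube n).Adj z x → x ∈ (P j).support → x = avec j := by
      intro x hadj hxs
      have hd : hammingDist (fun _ => false) x = 1 := hadj
      obtain ⟨k, hk⟩ := eq_avec_of_dist_one x hd
      have hstart : x ∈ (P k).support := by
        rw [hk]
        exact (P k).start_mem_support
      obtain ⟨m, -, hm⟩ := hcover x
      have h1 : j = m := hm j hxs
      have h2 : k = m := hm k hstart
      rw [hk, h2, ← h1]
    have hu := key u hadju hus
    have hw := key w hadjw hws
    exact huw (hu.trans hw.symm)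
end

section
/- Let A be a balanced pair-set in Q_n with |A| ≤ 2n-3. Then the set enco(∪A) of vertices encompassed by ∪A has at most 2 elements, and if α, β ∈ enco(∪A) are distinct then χ(α) ≠ χ(β). -/
open SimpleGraph Finset

attribute [local instance 10] Classical.propDecidable

section auxx
variable {n : ℕ}

lemma chi_mul_chi (α β : Vtx n) : chi α * chi β = (-1 : ℤ) ^ hammingDist α β := by
  unfold chi
  rw [← Finset.prod_mul_distrib]
  have hpt : ∀ i : Fin n, ((if α i then (-1:ℤ) else 1) * if β i then (-1:ℤ) else 1)
      = if α i ≠ β i then (-1:ℤ) else 1 := by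
    intro i; cases hα : α i <;> cases hβ : β i <;> simp
  rw [Finset.prod_congr rfl fun i _ => hpt i, hammingDist]
  rw [Finset.prod_ite (fun _ => (-1 : ℤ)) (fun _ => (1 : ℤ))]
  rw [Finset.prod_const, Finset.prod_const, one_pow, mul_one]

lemma chi_sq (α : Vtx n) : chi α * chi α = 1 := by
  have := chi_mul_chi α α
  simpa [hammingDist_self] using this

lemma chi_pm (α : Vtx n) : chi α = 1 ∨ chi α = -1 := mul_self_eq_one_iff.mp (chi_sq α)

lemma chi_adj {α β : Vtx n} (h : hammingDist α β = 1) : chi β = -chi α := by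
  have h2 := chi_mul_chi α β
  rw [h, pow_one] at h2
  calc chi β = (chi α * chi α) * chi β := by rw [chi_sq, one_mul]
    _ = chi α * (chi α * chi β) := mul_assoc _ _ _
    _ = chi α * (-1) := by rw [h2]
    _ = -chi α := by ring

lemma even_dist {α β : Vtx n} (h : chi α = chi β) : Even (hammingDist α β) := by
  have h2 := chi_mul_chi α β
  rw [← h, chi_sq] at h2
  rcases Nat.even_or_odd (hammingDist α β) with he | ho
  · exact he
  · rw [ho.neg_one_pow] at h2; norm_num at h2

def gup (γ : Vtx n) (a : Fin n) : Vtx n := Function.update γ a (!(γ a))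

lemma dist_one_iff (γ v : Vtx n) : hammingDist γ v = 1 ↔ ∃ a, v = gup γ a := by
  constructor
  · intro h
    rw [hammingDist, Finset.card_eq_one] at h
    obtain ⟨a, ha⟩ := h
    refine ⟨a, funext fun j => ?_⟩
    by_cases hj : j = a
    · subst hj
      have hmem : j ∈ Finset.univ.filter fun i => γ i ≠ v i := by rw [ha]; simp
      have : γ j ≠ v j := (Finset.mem_filter.mp hmem).2
      simp only [gup, Function.update_self]
      cases hv : v j <;> cases hg : γ j <;> simp_all
    · have hmem : j ∉ Finset.univ.filter fun i => γ i ≠ v i := by rw [ha]; simp [hj]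
      have : γ j = v j := by simpa using hmem
      simp [gup, Function.update_of_ne hj, this]
  · rintro ⟨a, rfl⟩
    rw [hammingDist]
    have : (Finset.univ.filter fun i => γ i ≠ gup γ a i) = {a} := by
      ext j
      by_cases hj : j = a
      · subst hj; simp only [Finset.mem_filter]; simp [gup, Function.update_self]
      · simp only [Finset.mem_filter]; simp [gup, Function.update_of_ne hj, hj]
    rw [this, Finset.card_singleton]

lemma gup_inj (γ : Vtx n) : Function.Injective (gup γ) := by
  intro a b h
  by_contra hab
  have := congrFun h a
  rw [gup, gup, Function.update_self, Function.update_of_ne hab] at this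
  exact Bool.not_ne_self _ this

def NbrF (γ : Vtx n) : Finset (Vtx n) := Finset.univ.filter fun v => hammingDist γ v = 1

lemma nbr_card (γ : Vtx n) : (NbrF γ).card = n := by
  have : NbrF γ = Finset.univ.image (gup γ) := by
    ext v
    simp only [NbrF, Finset.mem_filter, Finset.mem_univ, true_and, Finset.mem_image]
    rw [dist_one_iff]
    exact exists_congr fun a => eq_comm
  rw [this, Finset.card_image_of_injective _ (gup_inj γ), Finset.card_univ, Fintype.card_fin]

lemma common_nbr {γ γ' v : Vtx n} (hne : γ ≠ γ') (h1 : hammingDist γ v = 1)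
    (h2 : hammingDist γ' v = 1) :
    ∃ a ∈ Finset.univ.filter (fun i => γ i ≠ γ' i), v = gup γ a ∧
      (Finset.univ.filter (fun i => γ i ≠ γ' i)).card = 2 := by
  set D := Finset.univ.filter (fun i => γ i ≠ γ' i) with hD
  obtain ⟨a, rfl⟩ := (dist_one_iff γ v).mp h1
  by_cases ha : a ∈ D
  · refine ⟨a, ha, rfl, ?_⟩
    have hF : (Finset.univ.filter fun j => γ' j ≠ gup γ a j) = D.erase a := by
      ext j
      by_cases hj : j = a
      · subst hj
        have haD : γ j ≠ γ' j := by simpa [hD] using ha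
        have hgg : γ' j ≠ γ j := Ne.symm haD
        have : γ' j = !(γ j) := by cases h : γ j <;> cases h' : γ' j <;> simp_all
        simp only [Finset.mem_filter]; simp [gup, Function.update_self, this]
      · simp only [Finset.mem_filter]; simp [gup, Function.update_of_ne hj, hj, hD, ne_comm]
    have := h2
    rw [hammingDist, hF, Finset.card_erase_of_mem ha] at this
    omega
  · exfalso
    have hF : (Finset.univ.filter fun j => γ' j ≠ gup γ a j) = insert a D := by
      ext j
      by_cases hj : j = a
      · subst hj
        have hgg : γ' j = γ j := by
          by_contra hc
          apply ha
          simp only [hD, Finset.mem_filter, Finset.mem_univ, true_and]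
          exact fun h => hc h.symm
        simp only [Finset.mem_filter]; simp [gup, Function.update_self, hgg]
      · simp only [Finset.mem_filter]; simp [gup, Function.update_of_ne hj, hj, hD, ne_comm]
    have := h2
    rw [hammingDist, hF, Finset.card_insert_of_notMem ha] at this
    have hD0 : D.card = 0 := by omega
    rw [Finset.card_eq_zero] at hD0
    apply hne
    funext j
    by_contra hc
    have : j ∈ D := by simp [hD, hc]
    simp [hD0] at this

lemma inter_card_le_two (γ γ' : Vtx n) (hne : γ ≠ γ') :
    (NbrF γ ∩ NbrF γ').card ≤ 2 := by
  rcases Finset.eq_empty_or_nonempty (NbrF γ ∩ NbrF γ') with h | ⟨w, hw⟩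
  · simp [h]
  · set D := Finset.univ.filter (fun i => γ i ≠ γ' i) with hD
    obtain ⟨hw1, hw2⟩ := Finset.mem_inter.mp hw
    obtain ⟨_, _, _, hDcard⟩ := common_nbr hne
      ((Finset.mem_filter.mp hw1).2) ((Finset.mem_filter.mp hw2).2)
    have hsub : NbrF γ ∩ NbrF γ' ⊆ D.image (gup γ) := by
      intro v hv
      obtain ⟨hv1, hv2⟩ := Finset.mem_inter.mp hv
      obtain ⟨a, haD, hva, _⟩ := common_nbr hne
        ((Finset.mem_filter.mp hv1).2) ((Finset.mem_filter.mp hv2).2)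
      exact Finset.mem_image.mpr ⟨a, haD, hva.symm⟩
    calc (NbrF γ ∩ NbrF γ').card ≤ (D.image (gup γ)).card := Finset.card_le_card hsub
      _ ≤ D.card := Finset.card_image_le
      _ = 2 := hDcard

end auxx


section keyproof
variable {n : ℕ}

lemma cube_adj {α β : Vtx n} : (cube n).Adj α β ↔ hammingDist α β = 1 := Iff.rfl

lemma key_lemma (A : Finset (Sym2 (Vtx n)))
    (hA : IsPairSet A) (hbal : BalancedPS A) (hcard : A.card ≤ 2 * n - 3) :
    ∀ γ γ' : Vtx n, γ ∈ enco (suppA A) → γ' ∈ enco (suppA A) → γ ≠ γ' →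
      chi γ ≠ chi γ' := by
  intro γ γ' hγ hγ' hne hχ
  have hev : Even (hammingDist γ γ') := even_dist hχ
  have hd0 : hammingDist γ γ' ≠ 0 := fun h => hne (hammingDist_eq_zero.mp h)
  have hdn : hammingDist γ γ' ≤ n :=
    le_trans hammingDist_le_card_fintype (le_of_eq (Fintype.card_fin n))
  have hn2 : 2 ≤ n := by obtain ⟨r, hr⟩ := hev; omega
  obtain ⟨ε, hε⟩ : ∃ ε : ℤ, ε = -chi γ := ⟨_, rfl⟩
  have hεsq : ε * ε = 1 := by rw [hε]; simpa using chi_sq γ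
  have hεpm : ε = 1 ∨ ε = -1 := mul_self_eq_one_iff.mp hεsq
  set S : Finset (Vtx n) := NbrF γ ∪ NbrF γ' with hS
  have hSchi : ∀ v ∈ S, chi v = ε := by
    intro v hv
    rcases Finset.mem_union.mp hv with h | h
    · rw [hε]; exact chi_adj (Finset.mem_filter.mp h).2
    · rw [hε, hχ]; exact chi_adj (Finset.mem_filter.mp h).2
  have hSsupp : ∀ v ∈ S, ∃ p ∈ A, v ∈ p := by
    intro v hv
    rcases Finset.mem_union.mp hv with h | h
    · exact hγ v (cube_adj.mpr (Finset.mem_filter.mp h).2)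
    · exact hγ' v (cube_adj.mpr (Finset.mem_filter.mp h).2)
  classical
  set c : Sym2 (Vtx n) → ℤ := Sym2.lift
    ⟨fun α β => (if chi α = ε then (1:ℤ) else 0) + (if chi β = ε then 1 else 0),
      fun _ _ => add_comm _ _⟩ with hc
  have h1 : ∀ δ : Vtx n, 2 * (if chi δ = ε then (1:ℤ) else 0) = 1 + ε * chi δ := by
    intro δ
    by_cases h : chi δ = ε
    · rw [if_pos h, h]; linear_combination -hεsq
    · have hδ : chi δ = -ε := by
        rcases chi_pm δ with h' | h' <;> rcases hεpm with h'' | h'' <;> simp_all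
      rw [if_neg h, hδ]; linear_combination hεsq
  have hterm : ∀ p : Sym2 (Vtx n), 2 * c p = 2 + ε * pairChi p := by
    intro p
    induction p using Sym2.ind with
    | _ α β =>
      have hcp : c s(α, β) =
          (if chi α = ε then (1:ℤ) else 0) + (if chi β = ε then 1 else 0) := rfl
      have hpc : pairChi s(α, β) = chi α + chi β := rfl
      rw [hcp, hpc]
      have ha := h1 α
      have hb := h1 β
      ring_nf
      ring_nf at ha hb
      linarith
  have hbal' : ∑ p ∈ A, pairChi p = 0 := hbal
  have hsum2 : 2 * ∑ p ∈ A, c p = 2 * (A.card : ℤ) := by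
    calc 2 * ∑ p ∈ A, c p = ∑ p ∈ A, (2 + ε * pairChi p) := by
          rw [Finset.mul_sum]; exact Finset.sum_congr rfl fun p _ => hterm p
      _ = 2 * (A.card : ℤ) + ε * ∑ p ∈ A, pairChi p := by
          rw [Finset.sum_add_distrib, Finset.sum_const, ← Finset.mul_sum,
            nsmul_eq_mul]
          ring
      _ = 2 * (A.card : ℤ) := by rw [hbal']; ring
  have hSle : (S.card : ℤ) ≤ ∑ p ∈ A, c p := by
    have hsub : S ⊆ A.biUnion fun p => S.filter fun v => v ∈ p := by
      intro v hv
      obtain ⟨p, hp, hvp⟩ := hSsupp v hv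
      exact Finset.mem_biUnion.mpr ⟨p, hp, Finset.mem_filter.mpr ⟨hv, hvp⟩⟩
    have h1' : S.card ≤ ∑ p ∈ A, (S.filter fun v => v ∈ p).card :=
      le_trans (Finset.card_le_card hsub) Finset.card_biUnion_le
    have h2 : ∀ p ∈ A, (((S.filter fun v => v ∈ p).card : ℤ)) ≤ c p := by
      intro p _
      induction p using Sym2.ind with
      | _ α β =>
        have hcp : c s(α, β) =
            (if chi α = ε then (1:ℤ) else 0) + (if chi β = ε then 1 else 0) := rfl
        rw [hcp]
        have hmem : ∀ v ∈ S.filter (fun v => v ∈ s(α, β)),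
            (v = α ∧ chi α = ε) ∨ (v = β ∧ chi β = ε) := by
          intro v hv
          obtain ⟨hvS, hvp⟩ := Finset.mem_filter.mp hv
          rcases Sym2.mem_iff.mp hvp with rfl | rfl
          · exact Or.inl ⟨rfl, hSchi _ hvS⟩
          · exact Or.inr ⟨rfl, hSchi _ hvS⟩
        by_cases hα : chi α = ε <;> by_cases hβ : chi β = ε
        · rw [if_pos hα, if_pos hβ]
          have hsub2 : S.filter (fun v => v ∈ s(α, β)) ⊆ {α, β} := by
            intro v hv
            rcases hmem v hv with ⟨rfl, _⟩ | ⟨rfl, _⟩ <;> simp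
          have hle := Finset.card_le_card hsub2
          have hle2 : ({α, β} : Finset (Vtx n)).card ≤ 2 :=
            le_trans (Finset.card_insert_le _ _) (by simp)
          exact_mod_cast le_trans hle hle2
        · rw [if_pos hα, if_neg hβ]
          have hsub2 : S.filter (fun v => v ∈ s(α, β)) ⊆ {α} := by
            intro v hv
            rcases hmem v hv with ⟨rfl, _⟩ | ⟨rfl, hb⟩
            · simp
            · exact absurd hb hβ
          have hle := Finset.card_le_card hsub2
          simpa using (by exact_mod_cast hle :
            ((S.filter (fun v => v ∈ s(α, β))).card : ℤ) ≤ 1)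
        · rw [if_neg hα, if_pos hβ]
          have hsub2 : S.filter (fun v => v ∈ s(α, β)) ⊆ {β} := by
            intro v hv
            rcases hmem v hv with ⟨rfl, ha⟩ | ⟨rfl, _⟩
            · exact absurd ha hα
            · simp
          have hle := Finset.card_le_card hsub2
          simpa using (by exact_mod_cast hle :
            ((S.filter (fun v => v ∈ s(α, β))).card : ℤ) ≤ 1)
        · rw [if_neg hα, if_neg hβ]
          have hsub2 : S.filter (fun v => v ∈ s(α, β)) = ∅ := by
            rw [Finset.eq_empty_iff_forall_notMem]
            intro v hv
            rcases hmem v hv with ⟨_, ha⟩ | ⟨_, hb⟩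
            · exact hα ha
            · exact hβ hb
          rw [hsub2]
          simp
    calc (S.card : ℤ) ≤ ((∑ p ∈ A, (S.filter fun v => v ∈ p).card : ℕ) : ℤ) := by
          exact_mod_cast h1'
      _ = ∑ p ∈ A, (((S.filter fun v => v ∈ p).card : ℕ) : ℤ) := by push_cast; rfl
      _ ≤ ∑ p ∈ A, c p := Finset.sum_le_sum h2
  have hSA : S.card ≤ A.card := by
    have hsum : ∑ p ∈ A, c p = (A.card : ℤ) := by linarith
    have : (S.card : ℤ) ≤ (A.card : ℤ) := hsum ▸ hSle
    exact_mod_cast this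
  have hScard : 2 * n ≤ S.card + 2 := by
    have hu := Finset.card_union_add_card_inter (NbrF γ) (NbrF γ')
    have hi := inter_card_le_two γ γ' hne
    rw [nbr_card, nbr_card] at hu
    rw [← hS] at hu
    omega
  omega

end keyproof

/-- If `A` is a balanced pair-set in `Q_n` with
`|A| ≤ 2n - 3`, then at most two vertices are encompassed by `∪A`, and two
distinct encompassed vertices have different parities. -/

theorem stmt9 (n : ℕ) (A : Finset (Sym2 (Vtx n)))
    (hA : IsPairSet A) (hbal : BalancedPS A) (hcard : A.card ≤ 2 * n - 3) :
    (enco (suppA A)).encard ≤ 2 ∧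
    ∀ α β : Vtx n, α ∈ enco (suppA A) → β ∈ enco (suppA A) → α ≠ β →
      chi α ≠ chi β := by
  have key := key_lemma A hA hbal hcard
  refine ⟨?_, key⟩
  have hinj : Set.InjOn chi (enco (suppA A)) := by
    intro a ha b hb h
    by_contra hne
    exact key a b ha hb hne h
  calc (enco (suppA A)).encard = (chi '' enco (suppA A)).encard :=
        (hinj.encard_image).symm
    _ ≤ ({1, -1} : Set ℤ).encard := by
        apply Set.encard_mono
        rintro x ⟨a, -, rfl⟩
        exact chi_pm a
    _ = 2 := Set.encard_pair (by norm_num)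
end

section
/- Let n > 1, let A and B be connectable pair-sets in Q_{n-1}, let i ∈ [n] and k ∈ {0,1}. Then the pair-set ι_{i,k}(A,B) in Q_n is connectable, where ι_{i,k}(A,B) consists of all pairs {ι_{i=k}(α), ι_{i=k}(β)} for {α,β} ∈ A together with all pairs {ι_{i=1-k}(α), ι_{i=1-k}(β)} for {α,β} ∈ B. -/
open SimpleGraph Finset

attribute [local instance 10] Classical.propDecidable

section Aux

variable {m : ℕ}

lemma hd_ins (i : Fin (m + 1)) (c : Bool) (α β : Vtx m) :
    hammingDist (Fin.insertNth (α := fun _ => Bool) i c α) (Fin.insertNth (α := fun _ => Bool) i c β) = hammingDist α β := by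
  unfold hammingDist
  rw [Finset.card_filter, Finset.card_filter, Fin.sum_univ_succAbove _ i]
  simp [Fin.insertNth_apply_same, Fin.insertNth_apply_succAbove]

lemma ins_inj (i : Fin (m + 1)) (c : Bool) : Function.Injective (Fin.insertNth (α := fun _ => Bool) i c : Vtx m → Vtx (m+1)) := by
  intro a b h
  have := congrArg (Fin.removeNth i) h
  simpa using this

/-- Insertion as a graph homomorphism `cube m →g cube (m+1)`. -/
def insHom (i : Fin (m + 1)) (c : Bool) : cube m →g cube (m + 1) where
  toFun := Fin.insertNth (α := fun _ => Bool) i c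
  map_rel' := by
    intro a b h
    show hammingDist _ _ = 1
    rw [hd_ins]
    exact h

lemma insHom_apply (i : Fin (m + 1)) (c : Bool) (a : Vtx m) :
    insHom i c a = Fin.insertNth (α := fun _ => Bool) i c a := rfl

lemma rho_iota (i : Fin (m + 1)) (c : Bool) (q : Sym2 (Vtx m)) :
    Sym2.map (Fin.removeNth i) (Sym2.map (Fin.insertNth (α := fun _ => Bool) i c) q) = q := by
  induction q using Sym2.ind with
  | _ a b => simp

lemma mem_iota_coord {i : Fin (m + 1)} {c : Bool} {q : Sym2 (Vtx m)} {v : Vtx (m + 1)}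
    (hv : v ∈ Sym2.map (Fin.insertNth (α := fun _ => Bool) i c) q) : v i = c := by
  induction q using Sym2.ind with
  | _ a b =>
    simp only [Sym2.map_pair_eq, Sym2.mem_iff] at hv
    rcases hv with rfl | rfl <;> simp

/-- The dependent walk-choosing function. -/
noncomputable def FW (i : Fin (m + 1)) (k : Bool)
    (sA tA : Sym2 (Vtx m) → Vtx m) (pA : ∀ p, (cube m).Walk (sA p) (tA p))
    (sB tB : Sym2 (Vtx m) → Vtx m) (pB : ∀ p, (cube m).Walk (sB p) (tB p))
    (p : Sym2 (Vtx (m + 1))) : Σ' a b : Vtx (m + 1), (cube (m + 1)).Walk a b :=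
  if ∀ v ∈ p, v i = k then
    ⟨_, _, (pA (Sym2.map (Fin.removeNth i) p)).map (insHom i k)⟩
  else
    ⟨_, _, (pB (Sym2.map (Fin.removeNth i) p)).map (insHom i (!k))⟩

lemma FW_pos {i : Fin (m + 1)} {k : Bool}
    {sA tA : Sym2 (Vtx m) → Vtx m} {pA : ∀ p, (cube m).Walk (sA p) (tA p)}
    {sB tB : Sym2 (Vtx m) → Vtx m} {pB : ∀ p, (cube m).Walk (sB p) (tB p)}
    {p : Sym2 (Vtx (m + 1))} (h : ∀ v ∈ p, v i = k) :
    FW i k sA tA pA sB tB pB p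
      = ⟨_, _, (pA (Sym2.map (Fin.removeNth i) p)).map (insHom i k)⟩ :=
  if_pos h

lemma FW_neg {i : Fin (m + 1)} {k : Bool}
    {sA tA : Sym2 (Vtx m) → Vtx m} {pA : ∀ p, (cube m).Walk (sA p) (tA p)}
    {sB tB : Sym2 (Vtx m) → Vtx m} {pB : ∀ p, (cube m).Walk (sB p) (tB p)}
    {p : Sym2 (Vtx (m + 1))} (h : ¬ ∀ v ∈ p, v i = k) :
    FW i k sA tA pA sB tB pB p
      = ⟨_, _, (pB (Sym2.map (Fin.removeNth i) p)).map (insHom i (!k))⟩ :=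
  if_neg h

end Aux

/-- For `n = m + 1 > 1`, if `A` and `B` are connectable
pair-sets in `Q_{n-1}`, then `ι_{i,k}(A, B)` is a connectable pair-set in
`Q_n`, for every `i ∈ [n]` and `k ∈ {0,1}`. -/
theorem stmt11 (m : ℕ) (hm : 1 ≤ m) (A B : Finset (Sym2 (Vtx m)))
    (hA : IsPairSet A) (hB : IsPairSet B)
    (hcA : Connectable A) (hcB : Connectable B)
    (i : Fin (m + 1)) (k : Bool) :
    Connectable (iotaPairs i k A B) := by
  classical
  obtain ⟨sA, tA, pA, hA1, hA2, hA3⟩ := hcA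
  obtain ⟨sB, tB, pB, hB1, hB2, hB3⟩ := hcB
  refine ⟨fun p => (FW i k sA tA pA sB tB pB p).1,
          fun p => (FW i k sA tA pA sB tB pB p).2.1,
          fun p => (FW i k sA tA pA sB tB pB p).2.2, ?_, ?_, ?_⟩
  · intro p hp
    rcases Finset.mem_union.mp hp with h | h
    · obtain ⟨q, hq, rfl⟩ := Finset.mem_image.mp h
      have hcond : ∀ v ∈ Sym2.map (Fin.insertNth (α := fun _ => Bool) i k) q, v i = k := fun v hv => mem_iota_coord hv
      beta_reduce
      rw [FW_pos hcond]
      conv_lhs => rw [hA1 q hq]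
      simp [Sym2.map_pair_eq, rho_iota, insHom_apply]
    · obtain ⟨q, hq, rfl⟩ := Finset.mem_image.mp h
      have hcond : ¬ ∀ v ∈ Sym2.map (Fin.insertNth (α := fun _ => Bool) i (!k)) q, v i = k := by
        intro hc
        induction q using Sym2.ind with
        | _ a b =>
          have : Fin.insertNth (α := fun _ => Bool) i (!k) a ∈ Sym2.map (Fin.insertNth (α := fun _ => Bool) i (!k)) s(a, b) := by simp
          have h1 := hc _ this
          have h2 : (Fin.insertNth (α := fun _ => Bool) i (!k) a) i = !k := by simp
          rw [h1] at h2
          exact (Bool.not_ne_self k) h2.symm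
      beta_reduce
      rw [FW_neg hcond]
      conv_lhs => rw [hB1 q hq]
      simp [Sym2.map_pair_eq, rho_iota, insHom_apply]
  · intro p hp
    rcases Finset.mem_union.mp hp with h | h
    · obtain ⟨q, hq, rfl⟩ := Finset.mem_image.mp h
      have hcond : ∀ v ∈ Sym2.map (Fin.insertNth (α := fun _ => Bool) i k) q, v i = k := fun v hv => mem_iota_coord hv
      beta_reduce
      rw [FW_pos hcond]
      exact SimpleGraph.Walk.map_isPath_of_injective (ins_inj i k)
        (by rw [rho_iota]; exact hA2 q hq)
    · obtain ⟨q, hq, rfl⟩ := Finset.mem_image.mp h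
      have hcond : ¬ ∀ v ∈ Sym2.map (Fin.insertNth (α := fun _ => Bool) i (!k)) q, v i = k := by
        intro hc
        induction q using Sym2.ind with
        | _ a b =>
          have : Fin.insertNth (α := fun _ => Bool) i (!k) a ∈ Sym2.map (Fin.insertNth (α := fun _ => Bool) i (!k)) s(a, b) := by simp
          have h1 := hc _ this
          have h2 : (Fin.insertNth (α := fun _ => Bool) i (!k) a) i = !k := by simp
          rw [h1] at h2
          exact (Bool.not_ne_self k) h2.symm
      beta_reduce
      rw [FW_neg hcond]
      exact SimpleGraph.Walk.map_isPath_of_injective (ins_inj i (!k))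
        (by rw [rho_iota]; exact hB2 q hq)
  · intro v
    by_cases hvk : v i = k
    · obtain ⟨q, ⟨hq, hsup⟩, huniq⟩ := hA3 (Fin.removeNth i v)
      have hveq : Fin.insertNth (α := fun _ => Bool) i k (Fin.removeNth i v) = v := by
        rw [← hvk]; exact Fin.insertNth_self_removeNth i v
      refine ⟨Sym2.map (Fin.insertNth (α := fun _ => Bool) i k) q, ⟨?_, ?_⟩, ?_⟩
      · exact Finset.mem_union_left _ (Finset.mem_image_of_mem _ hq)
      · have hcond : ∀ w ∈ Sym2.map (Fin.insertNth (α := fun _ => Bool) i k) q, w i = k :=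
          fun w hw => mem_iota_coord hw
        beta_reduce
        rw [FW_pos hcond]
        rw [SimpleGraph.Walk.support_map]
        rw [rho_iota]
        exact List.mem_map.mpr ⟨_, hsup, hveq⟩
      · rintro p ⟨hp, hvp⟩
        rcases Finset.mem_union.mp hp with h | h
        · obtain ⟨q', hq', rfl⟩ := Finset.mem_image.mp h
          have hcond : ∀ w ∈ Sym2.map (Fin.insertNth (α := fun _ => Bool) i k) q', w i = k :=
            fun w hw => mem_iota_coord hw
          beta_reduce at hvp
          rw [FW_pos hcond] at hvp
          rw [SimpleGraph.Walk.support_map, rho_iota] at hvp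
          obtain ⟨w, hw, hwv⟩ := List.mem_map.mp hvp
          have : w = Fin.removeNth i v := by
            have := congrArg (Fin.removeNth i) hwv
            simpa [insHom_apply] using this
          subst this
          rw [huniq q' ⟨hq', hw⟩]
        · obtain ⟨q', hq', rfl⟩ := Finset.mem_image.mp h
          exfalso
          have hcond : ¬ ∀ w ∈ Sym2.map (Fin.insertNth (α := fun _ => Bool) i (!k)) q', w i = k := by
            intro hc
            induction q' using Sym2.ind with
            | _ a b =>
              have : Fin.insertNth (α := fun _ => Bool) i (!k) a ∈ Sym2.map (Fin.insertNth (α := fun _ => Bool) i (!k)) s(a, b) := by simp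
              have h1 := hc _ this
              have h2 : (Fin.insertNth (α := fun _ => Bool) i (!k) a) i = !k := by simp
              rw [h1] at h2
              exact (Bool.not_ne_self k) h2.symm
          beta_reduce at hvp
          rw [FW_neg hcond] at hvp
          rw [SimpleGraph.Walk.support_map] at hvp
          obtain ⟨w, _, hwv⟩ := List.mem_map.mp hvp
          have : v i = !k := by rw [← hwv]; simp [insHom_apply]
          rw [hvk] at this
          exact (Bool.not_ne_self k) this.symm
    · have hvk' : v i = !k := by
        cases k <;> revert hvk <;> cases hv : v i <;> simp
      obtain ⟨q, ⟨hq, hsup⟩, huniq⟩ := hB3 (Fin.removeNth i v)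
      have hveq : Fin.insertNth (α := fun _ => Bool) i (!k) (Fin.removeNth i v) = v := by
        rw [← hvk']; exact Fin.insertNth_self_removeNth i v
      refine ⟨Sym2.map (Fin.insertNth (α := fun _ => Bool) i (!k)) q, ⟨?_, ?_⟩, ?_⟩
      · exact Finset.mem_union_right _ (Finset.mem_image_of_mem _ hq)
      · have hcond : ¬ ∀ w ∈ Sym2.map (Fin.insertNth (α := fun _ => Bool) i (!k)) q, w i = k := by
          intro hc
          induction q using Sym2.ind with
          | _ a b =>
            have : Fin.insertNth (α := fun _ => Bool) i (!k) a ∈ Sym2.map (Fin.insertNth (α := fun _ => Bool) i (!k)) s(a, b) := by simp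
            have h1 := hc _ this
            have h2 : (Fin.insertNth (α := fun _ => Bool) i (!k) a) i = !k := by simp
            rw [h1] at h2
            exact (Bool.not_ne_self k) h2.symm
        beta_reduce
        rw [FW_neg hcond]
        rw [SimpleGraph.Walk.support_map, rho_iota]
        exact List.mem_map.mpr ⟨_, hsup, hveq⟩
      · rintro p ⟨hp, hvp⟩
        rcases Finset.mem_union.mp hp with h | h
        · obtain ⟨q', hq', rfl⟩ := Finset.mem_image.mp h
          exfalso
          have hcond : ∀ w ∈ Sym2.map (Fin.insertNth (α := fun _ => Bool) i k) q', w i = k :=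
            fun w hw => mem_iota_coord hw
          beta_reduce at hvp
          rw [FW_pos hcond] at hvp
          rw [SimpleGraph.Walk.support_map] at hvp
          obtain ⟨w, _, hwv⟩ := List.mem_map.mp hvp
          have : v i = k := by rw [← hwv]; simp [insHom_apply]
          exact hvk this
        · obtain ⟨q', hq', rfl⟩ := Finset.mem_image.mp h
          have hcond : ¬ ∀ w ∈ Sym2.map (Fin.insertNth (α := fun _ => Bool) i (!k)) q', w i = k := by
            intro hc
            induction q' using Sym2.ind with
            | _ a b =>
              have : Fin.insertNth (α := fun _ => Bool) i (!k) a ∈ Sym2.map (Fin.insertNth (α := fun _ => Bool) i (!k)) s(a, b) := by simp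
              have h1 := hc _ this
              have h2 : (Fin.insertNth (α := fun _ => Bool) i (!k) a) i = !k := by simp
              rw [h1] at h2
              exact (Bool.not_ne_self k) h2.symm
          beta_reduce at hvp
          rw [FW_neg hcond] at hvp
          rw [SimpleGraph.Walk.support_map, rho_iota] at hvp
          obtain ⟨w, hw, hwv⟩ := List.mem_map.mp hvp
          have : w = Fin.removeNth i v := by
            have := congrArg (Fin.removeNth i) hwv
            simpa [insHom_apply] using this
          subst this
          rw [huniq q' ⟨hq', hw⟩]
end
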